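/- Let Ā be an arbitrary d-by-d real matrix and let A be a random matrix whose entries are independent Gaussians of variance σ², with entry (i,j) having mean Ā_{i,j}. Then for all x > 0, the probability that A is singular or ‖A^{-1}‖ ≥ x is at most d^{3/2}/(xσ). -/

import Mathlib

open Matrix MeasureTheory ProbabilityTheory
open scoped NNReal ENNReal

noncomputable def opNorm {d : ℕ} (A : Matrix (Fin d) (Fin d) ℝ) : ℝ :=
  ‖Matrix.toEuclideanCLM (𝕜 := ℝ) A‖

open Real
open scoped Matrix.Norms.L2Operator


noncomputable def ι (d : ℕ) : (Fin d → ℝ) ≃ₗ[ℝ] EuclideanSpace ℝ (Fin d) :=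
  (WithLp.linearEquiv 2 ℝ (Fin d → ℝ)).symm


lemma gaussianPDFReal_mul_identity (m₁ m₂ : ℝ) (v₁ v₂ : ℝ≥0) (h₁ : v₁ ≠ 0) (h₂ : v₂ ≠ 0)
    (y x : ℝ) :
    gaussianPDFReal m₁ v₁ x * gaussianPDFReal m₂ v₂ (y - x) =
      gaussianPDFReal (m₁ + m₂) (v₁ + v₂) y *
        gaussianPDFReal ((v₂ * m₁ + v₁ * (y - m₂)) / (v₁ + v₂)) (v₁ * v₂ / (v₁ + v₂)) x := by
  have hv₁ : (0:ℝ) < v₁ := lt_of_le_of_ne v₁.coe_nonneg (by exact_mod_cast (Ne.symm h₁))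
  have hv₂ : (0:ℝ) < v₂ := lt_of_le_of_ne v₂.coe_nonneg (by exact_mod_cast (Ne.symm h₂))
  have hv12 : (0:ℝ) < (v₁:ℝ) + v₂ := by linarith
  have hπ : (0:ℝ) < π := Real.pi_pos
  simp only [gaussianPDFReal, NNReal.coe_add, NNReal.coe_div, NNReal.coe_mul]
  rw [mul_mul_mul_comm, mul_mul_mul_comm ((Real.sqrt (2 * π * ((v₁:ℝ) + v₂)))⁻¹),
    ← Real.exp_add, ← Real.exp_add]
  have hconst : (Real.sqrt (2 * π * v₁))⁻¹ * (Real.sqrt (2 * π * v₂))⁻¹ =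
      (Real.sqrt (2 * π * ((v₁:ℝ) + v₂)))⁻¹ *
        (Real.sqrt (2 * π * ((v₁:ℝ) * v₂ / ((v₁:ℝ) + v₂))))⁻¹ := by
    rw [← mul_inv, ← mul_inv, ← Real.sqrt_mul (by positivity), ← Real.sqrt_mul (by positivity)]
    congr 1
    field_simp
  have hexp : -(x - m₁) ^ 2 / (2 * v₁) + -(y - x - m₂) ^ 2 / (2 * v₂) =
      -(y - (m₁ + m₂)) ^ 2 / (2 * ((v₁:ℝ) + v₂)) +
        -(x - ((v₂:ℝ) * m₁ + v₁ * (y - m₂)) / ((v₁:ℝ) + v₂)) ^ 2 /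
          (2 * ((v₁:ℝ) * v₂ / ((v₁:ℝ) + v₂))) := by
    field_simp
    ring
  rw [hconst, hexp]

lemma measurable_pdf2 (m₂ : ℝ) (v₂ : ℝ≥0) :
    Measurable (fun p : ℝ × ℝ => gaussianPDF (m₂ + p.1) v₂ p.2) := by
  unfold gaussianPDF gaussianPDFReal
  fun_prop

lemma gaussianReal_conv (m₁ m₂ : ℝ) (v₁ v₂ : ℝ≥0) :
    ((gaussianReal m₁ v₁).prod (gaussianReal m₂ v₂)).map (fun p : ℝ × ℝ => p.1 + p.2) =
      gaussianReal (m₁ + m₂) (v₁ + v₂) := by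
  by_cases h₁ : v₁ = 0
  · subst h₁
    rw [gaussianReal_zero_var, Measure.dirac_prod, Measure.map_map (by fun_prop) (by fun_prop)]
    have : ((fun p : ℝ × ℝ => p.1 + p.2) ∘ Prod.mk m₁) = (fun y => m₁ + y) := rfl
    rw [this, gaussianReal_map_const_add, add_comm m₂ m₁, zero_add]
  by_cases h₂ : v₂ = 0
  · subst h₂
    rw [gaussianReal_zero_var, Measure.prod_dirac, Measure.map_map (by fun_prop) (by fun_prop)]
    have : ((fun p : ℝ × ℝ => p.1 + p.2) ∘ (fun x => (x, m₂))) = (fun y => y + m₂) := rfl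
    rw [this, gaussianReal_map_add_const, add_zero]
  -- main case
  have h12 : v₁ + v₂ ≠ 0 := by simp [h₁]
  have hv' : v₁ * v₂ / (v₁ + v₂) ≠ 0 := by
    rw [div_ne_zero_iff]
    exact ⟨mul_ne_zero h₁ h₂, h12⟩
  ext s hs
  rw [Measure.map_apply (by fun_prop) hs,
    Measure.prod_apply (measurable_add hs : MeasurableSet _)]
  have hsec : ∀ x : ℝ, Prod.mk x ⁻¹' ((fun p : ℝ × ℝ => p.1 + p.2) ⁻¹' s) = (x + ·) ⁻¹' s := by
    intro x; rfl
  simp_rw [hsec]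
  have hmap : ∀ x : ℝ, gaussianReal m₂ v₂ ((x + ·) ⁻¹' s) = gaussianReal (m₂ + x) v₂ s := by
    intro x
    rw [← gaussianReal_map_const_add (μ := m₂) (v := v₂) x, Measure.map_apply (by fun_prop) hs]
  simp_rw [hmap]
  have happ : ∀ x : ℝ, gaussianReal (m₂ + x) v₂ s = ∫⁻ y in s, gaussianPDF (m₂ + x) v₂ y :=
    fun x => gaussianReal_apply _ h₂ s
  simp_rw [happ]
  -- integrate against the density of the first gaussian
  rw [gaussianReal_of_var_ne_zero _ h₁,
    lintegral_withDensity_eq_lintegral_mul _ (measurable_gaussianPDF _ _)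
      ((measurable_pdf2 m₂ v₂).lintegral_prod_right (f := fun x y => gaussianPDF (m₂ + x) v₂ y))]
  have hpull : ∀ x : ℝ,
      gaussianPDF m₁ v₁ x * ∫⁻ y in s, gaussianPDF (m₂ + x) v₂ y =
        ∫⁻ y in s, gaussianPDF m₁ v₁ x * gaussianPDF (m₂ + x) v₂ y := by
    intro x
    rw [lintegral_const_mul _ (measurable_gaussianPDF _ _)]
  simp only [Pi.mul_apply]
  simp_rw [hpull]
  rw [lintegral_lintegral_swap]
  swap
  · exact ((measurable_gaussianPDF m₁ v₁).comp measurable_fst |>.mul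
      (measurable_pdf2 m₂ v₂)).aemeasurable
  rw [gaussianReal_apply _ h12 s]
  refine setLIntegral_congr_fun hs (fun y _ => ?_)
  -- pointwise convolution identity
  have hptwise : ∀ x : ℝ, gaussianPDF m₁ v₁ x * gaussianPDF (m₂ + x) v₂ y =
      ENNReal.ofReal (gaussianPDFReal (m₁ + m₂) (v₁ + v₂) y) *
        gaussianPDF ((v₂ * m₁ + v₁ * (y - m₂)) / (v₁ + v₂)) (v₁ * v₂ / (v₁ + v₂)) x := by
    intro x
    rw [gaussianPDF, gaussianPDF, gaussianPDF,
      ← ENNReal.ofReal_mul (gaussianPDFReal_nonneg _ _ _),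
      ← ENNReal.ofReal_mul (gaussianPDFReal_nonneg _ _ _),
      ← gaussianPDFReal_sub, gaussianPDFReal_mul_identity m₁ m₂ v₁ v₂ h₁ h₂ y x]
  simp_rw [hptwise]
  rw [lintegral_const_mul _ (measurable_gaussianPDF _ _),
    lintegral_gaussianPDF_eq_one _ hv', mul_one, gaussianPDF]

lemma map_sum_gaussian : ∀ (n : ℕ) (u m : Fin n → ℝ) (v : Fin n → ℝ≥0),
    (Measure.pi fun j => gaussianReal (m j) (v j)).map (fun r => ∑ j, u j * r j) =
      gaussianReal (∑ j, u j * m j) (∑ j, ‖u j‖₊ ^ 2 * v j) := by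
  intro n
  induction n with
  | zero =>
      intro u m v
      simp only [Finset.univ_eq_empty, Finset.sum_empty]
      rw [show (fun r : Fin 0 → ℝ => (0:ℝ)) = (fun _ => 0) from rfl, Measure.map_const,
        measure_univ, one_smul, gaussianReal_zero_var]
  | succ n ih =>
      intro u m v
      have mp := measurePreserving_piFinSuccAbove (fun j : Fin (n+1) => gaussianReal (m j) (v j)) 0
      set e := MeasurableEquiv.piFinSuccAbove (fun _ : Fin (n+1) => ℝ) 0 with he
      have hcomp : (fun r : Fin (n+1) → ℝ => ∑ j, u j * r j) =
          (fun p : ℝ × (Fin n → ℝ) => u 0 * p.1 + ∑ j, u (Fin.succ j) * p.2 j) ∘ e := by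
        funext r
        simp only [Function.comp_apply, he, MeasurableEquiv.piFinSuccAbove_apply]
        rw [Fin.sum_univ_succAbove (fun j => u j * r j) 0]
        simp [Fin.succAbove_zero, Fin.tail]
      rw [hcomp, ← Measure.map_map (by fun_prop) e.measurable, mp.map_eq]
      have hsplit : (fun p : ℝ × (Fin n → ℝ) => u 0 * p.1 + ∑ j, u (Fin.succ j) * p.2 j) =
          (fun q : ℝ × ℝ => q.1 + q.2) ∘
            (Prod.map (fun x : ℝ => u 0 * x) (fun r : Fin n → ℝ => ∑ j, u (Fin.succ j) * r j)) := by
        funext p; simp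
      rw [hsplit, ← Measure.map_map (by fun_prop) (by fun_prop),
        ← Measure.map_prod_map _ _ (by fun_prop) (by fun_prop)]
      have h0 : (gaussianReal (m 0) (v 0)).map (fun x : ℝ => u 0 * x) =
          gaussianReal (u 0 * m 0) (‖u 0‖₊ ^ 2 * v 0) := by
        rw [gaussianReal_map_const_mul]
        congr 1
        ext
        simp [NNReal.coe_pow, sq_abs]
      have hrest : (Fin.succAbove 0 : Fin n → Fin (n+1)) = Fin.succ := Fin.succAbove_zero
      rw [show (Measure.pi fun j : Fin n => gaussianReal (m ((0:Fin (n+1)).succAbove j))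
            (v ((0:Fin (n+1)).succAbove j))) =
          (Measure.pi fun j : Fin n => gaussianReal (m (Fin.succ j)) (v (Fin.succ j))) by
            simp [hrest]]
      rw [h0, ih (fun j => u (Fin.succ j)) (fun j => m (Fin.succ j)) (fun j => v (Fin.succ j)),
        gaussianReal_conv]
      rw [Fin.sum_univ_succ (fun j => u j * m j), Fin.sum_univ_succ (fun j => ‖u j‖₊ ^ 2 * v j)]

lemma gaussianReal_abs_le (m : ℝ) (σ : ℝ≥0) (hσ : σ ≠ 0) (t : ℝ) (ht : 0 ≤ t) :
    gaussianReal m (σ ^ 2) {y : ℝ | |y| ≤ t} ≤ ENNReal.ofReal (t / σ) := by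
  have hσpos : (0:ℝ) < σ := lt_of_le_of_ne σ.coe_nonneg (by exact_mod_cast (Ne.symm hσ))
  have hv : (σ ^ 2 : ℝ≥0) ≠ 0 := pow_ne_zero _ hσ
  have hset : {y : ℝ | |y| ≤ t} = Set.Icc (-t) t := by ext y; simp [abs_le]
  rw [hset, gaussianReal_apply _ hv _]
  have hbd : ∀ y : ℝ, gaussianPDF m (σ ^ 2) y ≤
      ENNReal.ofReal ((Real.sqrt (2 * π * (σ^2 : ℝ≥0)))⁻¹) := by
    intro y
    rw [gaussianPDF, gaussianPDFReal]
    refine ENNReal.ofReal_le_ofReal ?_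
    have : rexp (-(y - m) ^ 2 / (2 * (σ^2 : ℝ≥0))) ≤ 1 := by
      rw [Real.exp_le_one_iff]
      have h2v : (0:ℝ) < 2 * (σ^2 : ℝ≥0) := by positivity
      exact div_nonpos_of_nonpos_of_nonneg (neg_nonpos_of_nonneg (sq_nonneg _)) h2v.le
    calc (Real.sqrt (2 * π * (σ^2 : ℝ≥0)))⁻¹ * rexp (-(y - m) ^ 2 / (2 * (σ^2 : ℝ≥0)))
        ≤ (Real.sqrt (2 * π * (σ^2 : ℝ≥0)))⁻¹ * 1 := by
          refine mul_le_mul_of_nonneg_left this (by positivity)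
      _ = _ := mul_one _
  calc ∫⁻ y in Set.Icc (-t) t, gaussianPDF m (σ ^ 2) y
      ≤ ∫⁻ _ in Set.Icc (-t) t, ENNReal.ofReal ((Real.sqrt (2 * π * (σ^2 : ℝ≥0)))⁻¹) :=
        lintegral_mono fun y => hbd y
    _ = ENNReal.ofReal ((Real.sqrt (2 * π * (σ^2 : ℝ≥0)))⁻¹) * volume (Set.Icc (-t) t) := by
        rw [setLIntegral_const]
    _ = ENNReal.ofReal ((Real.sqrt (2 * π * (σ^2 : ℝ≥0)))⁻¹) * ENNReal.ofReal (2 * t) := by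
        rw [Real.volume_Icc]
        congr 1
        ring
    _ = ENNReal.ofReal ((Real.sqrt (2 * π * (σ^2 : ℝ≥0)))⁻¹ * (2 * t)) := by
        rw [← ENNReal.ofReal_mul (by positivity)]
    _ ≤ ENNReal.ofReal (t / σ) := by
        refine ENNReal.ofReal_le_ofReal ?_
        have hsqrt : Real.sqrt (2 * π * (σ^2 : ℝ≥0)) = Real.sqrt (2 * π) * σ := by
          rw [Real.sqrt_mul (by positivity), NNReal.coe_pow,
            Real.sqrt_sq σ.coe_nonneg]
        have h2 : (2:ℝ) ≤ Real.sqrt (2 * π) := by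
          have : (4:ℝ) ≤ 2 * π := by nlinarith [Real.pi_gt_three]
          calc (2:ℝ) = Real.sqrt 4 := by
                rw [show (4:ℝ) = 2^2 by norm_num, Real.sqrt_sq (by norm_num)]
            _ ≤ Real.sqrt (2 * π) := Real.sqrt_le_sqrt this
        rw [hsqrt]
        rw [inv_mul_eq_div, div_le_div_iff₀ (by positivity) hσpos]
        nlinarith [mul_nonneg (mul_nonneg (sub_nonneg.2 h2) ht) hσpos.le]

lemma slice_bound (d n : ℕ) (hn : n < d) (M : Fin d → ℝ) (σ : ℝ≥0) (hσ : σ ≠ 0)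
    (t : ℝ) (ht : 0 ≤ t) (B : Fin n → (Fin d → ℝ)) :
    (Measure.pi fun j : Fin d => gaussianReal (M j) (σ ^ 2))
      {r : Fin d → ℝ | ∃ c : Fin n → ℝ, ‖ι d (r + ∑ j, c j • B j)‖ ≤ t} ≤
      ENNReal.ofReal (t / σ) := by
  classical
  set V : Submodule ℝ (EuclideanSpace ℝ (Fin d)) :=
    Submodule.span ℝ (Set.range fun j => ι d (B j)) with hV
  have hVne : V ≠ ⊤ := by
    intro h
    have := finrank_le_of_span_eq_top h
    rw [finrank_euclideanSpace_fin, Fintype.card_fin] at this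
    omega
  have hbot : Vᗮ ≠ ⊥ := by
    intro h
    exact hVne (Submodule.orthogonal_eq_bot_iff.mp h)
  obtain ⟨u', hu'V, hu'0⟩ := Submodule.ne_bot_iff _ |>.mp hbot
  set u : EuclideanSpace ℝ (Fin d) := (‖u'‖⁻¹ : ℝ) • u' with hu
  have huV : u ∈ Vᗮ := Submodule.smul_mem _ _ hu'V
  have hunorm : ‖u‖ = 1 := norm_smul_inv_norm hu'0
  have horth : ∀ j, (inner ℝ u (ι d (B j)) : ℝ) = 0 := by
    intro j
    have hBj : ι d (B j) ∈ V := Submodule.subset_span (Set.mem_range_self j)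
    exact (Submodule.mem_orthogonal' _ _).mp huV _ hBj
  -- the event is contained in a halfspace-slab event
  have hsub : {r : Fin d → ℝ | ∃ c : Fin n → ℝ, ‖ι d (r + ∑ j, c j • B j)‖ ≤ t} ⊆
      (fun r : Fin d → ℝ => ∑ k, u k * r k) ⁻¹' {y : ℝ | |y| ≤ t} := by
    rintro r ⟨c, hc⟩
    have hinner : (inner ℝ u (ι d r) : ℝ) = inner ℝ u (ι d (r + ∑ j, c j • B j)) := by
      rw [map_add, inner_add_right, map_sum, inner_sum]
      simp only [LinearEquiv.map_smul, inner_smul_right, horth, mul_zero,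
        Finset.sum_const_zero, add_zero]
    have hsum : (inner ℝ u (ι d r) : ℝ) = ∑ k, u k * r k := by
      rw [PiLp.inner_apply]
      congr 1
      funext k
      rw [RCLike.inner_apply', conj_trivial]
      rfl
    simp only [Set.mem_preimage, Set.mem_setOf_eq]
    rw [← hsum, hinner]
    calc |(inner ℝ u (ι d (r + ∑ j, c j • B j)) : ℝ)| ≤
          ‖u‖ * ‖ι d (r + ∑ j, c j • B j)‖ := abs_real_inner_le_norm u _
      _ ≤ 1 * t := by rw [hunorm]; exact mul_le_mul_of_nonneg_left hc (by norm_num)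
      _ = t := one_mul t
  refine le_trans (measure_mono hsub) ?_
  rw [← Measure.map_apply (by fun_prop) (by
    have : {y : ℝ | |y| ≤ t} = Set.Icc (-t) t := by ext y; simp [abs_le]
    rw [this]; exact measurableSet_Icc)]
  rw [map_sum_gaussian d (fun k => u k) M (fun _ => σ ^ 2)]
  have hvar : (∑ k : Fin d, ‖u k‖₊ ^ 2 * σ ^ 2) = σ ^ 2 := by
    rw [← Finset.sum_mul]
    have h1 : (∑ k : Fin d, ‖u k‖₊ ^ 2) = 1 := by
      have hreal : (∑ k : Fin d, ‖u k‖ ^ 2) = 1 := by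
        have := EuclideanSpace.norm_eq u
        rw [hunorm] at this
        have h2 := congrArg (· ^ 2) this
        simp only [one_pow] at h2
        rw [Real.sq_sqrt (by positivity)] at h2
        exact h2.symm
      apply NNReal.coe_injective
      push_cast
      simpa using hreal
    rw [h1, one_mul]
  rw [hvar]
  exact gaussianReal_abs_le _ σ hσ t ht

lemma continuous_iota (d : ℕ) : Continuous (ι d) :=
  (ι d).toLinearMap.continuous_of_finiteDimensional

lemma F_cont (d n : ℕ) (q : Fin n → ℝ) :
    Continuous (fun p : (Fin d → ℝ) × (Fin n → Fin d → ℝ) =>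
      ‖ι d (p.1 + ∑ j, q j • p.2 j)‖) := by
  have h1 : Continuous fun p : (Fin d → ℝ) × (Fin n → Fin d → ℝ) =>
      p.1 + ∑ j, q j • p.2 j :=
    continuous_fst.add (continuous_finset_sum _ fun j _ =>
      ((continuous_apply j).comp continuous_snd).const_smul (q j))
  exact ((continuous_iota d).comp h1).norm

lemma measurableSet_S (d n : ℕ) (t : ℝ) :
    MeasurableSet {p : (Fin d → ℝ) × (Fin n → Fin d → ℝ) |
      ∃ c : Fin n → ℝ, ‖ι d (p.1 + ∑ j, c j • p.2 j)‖ ≤ t} := by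
  have hset : {p : (Fin d → ℝ) × (Fin n → Fin d → ℝ) |
      ∃ c : Fin n → ℝ, ‖ι d (p.1 + ∑ j, c j • p.2 j)‖ ≤ t} =
      ⋂ (m : ℕ), ⋃ (q : Fin n → ℚ),
        {p | ‖ι d (p.1 + ∑ j, (q j : ℝ) • p.2 j)‖ < t + 1/(m+1)} := by
    ext p
    simp only [Set.mem_setOf_eq, Set.mem_iInter, Set.mem_iUnion]
    constructor
    · rintro ⟨c, hc⟩ m
      have hη : (0:ℝ) < 1/(m+1) := by positivity
      have hG : Continuous (fun c' : Fin n → ℝ => ‖ι d (p.1 + ∑ j, c' j • p.2 j)‖) := by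
        refine (continuous_iota d).norm.comp ?_
        exact continuous_const.add (continuous_finset_sum _ fun j _ =>
          (continuous_apply j).smul continuous_const)
      obtain ⟨δ, hδ, hball⟩ := Metric.continuousAt_iff.mp hG.continuousAt _ hη
      choose q hq using fun j => exists_rat_near (c j) hδ
      refine ⟨q, ?_⟩
      have hd : dist (fun j => (q j : ℝ)) c < δ := by
        rw [dist_pi_lt_iff hδ]
        intro j
        rw [Real.dist_eq, abs_sub_comm]
        exact hq j
      have := hball hd
      rw [Real.dist_eq] at this
      have habs := abs_lt.mp this
      linarith [habs.1, habs.2, hc]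
    · intro h
      set w := ι d p.1 with hw
      set C : Fin n → EuclideanSpace ℝ (Fin d) := fun j => ι d (p.2 j) with hC
      set V : Submodule ℝ (EuclideanSpace ℝ (Fin d)) :=
        Submodule.span ℝ (Set.range C) with hV
      have hrw : ∀ c : Fin n → ℝ,
          ι d (p.1 + ∑ j, c j • p.2 j) = w + ∑ j, c j • C j := by
        intro c
        rw [map_add, map_sum]
        simp only [LinearEquiv.map_smul]
        rfl
      have hmem : ∀ c : Fin n → ℝ, -(∑ j, c j • C j) ∈ V := by
        intro c
        exact neg_mem (Submodule.sum_mem _ fun j _ =>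
          Submodule.smul_mem _ _ (Submodule.subset_span (Set.mem_range_self j)))
      have hinf : Metric.infDist w V ≤ t := by
        refine le_of_forall_pos_le_add fun ε hε => ?_
        obtain ⟨m, hm⟩ := exists_nat_one_div_lt hε
        obtain ⟨q, hq⟩ := h m
        rw [hrw] at hq
        have h1 : Metric.infDist w V ≤ dist w (-(∑ j, (q j : ℝ) • C j)) :=
          Metric.infDist_le_dist_of_mem (hmem _)
        rw [dist_eq_norm, sub_neg_eq_add] at h1
        have : (1:ℝ)/(m+1) ≤ ε := le_of_lt (by exact_mod_cast hm)
        linarith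
      have hclosed : IsClosed (V : Set (EuclideanSpace ℝ (Fin d))) :=
        Submodule.closed_of_finiteDimensional V
      obtain ⟨y, hyV, hy⟩ := hclosed.exists_infDist_eq_dist ⟨0, V.zero_mem⟩ w
      obtain ⟨c, hc⟩ := (Submodule.mem_span_range_iff_exists_fun ℝ (v := C)).mp
        (show y ∈ Submodule.span ℝ (Set.range C) from hyV)
      refine ⟨fun j => -(c j), ?_⟩
      rw [hrw]
      have : w + ∑ j, (-(c j)) • C j = w - y := by
        rw [← hc]
        simp [sub_eq_add_neg, ← Finset.sum_neg_distrib]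
      rw [this, ← dist_eq_norm, ← hy]
      exact hinf
  rw [hset]
  refine MeasurableSet.iInter fun m => MeasurableSet.iUnion fun q => ?_
  exact measurableSet_lt ((F_cont d n (fun j => (q j : ℝ))).measurable) measurable_const

lemma iota_apply (d : ℕ) (v : Fin d → ℝ) :
    ι d v = (WithLp.equiv 2 (Fin d → ℝ)).symm v := rfl

-- norm attainment on finite-dimensional euclidean space
lemma exists_norm_attained (n : ℕ) (T : EuclideanSpace ℝ (Fin (n+1)) →L[ℝ] EuclideanSpace ℝ (Fin (n+1))) :
    ∃ v : EuclideanSpace ℝ (Fin (n+1)), ‖v‖ = 1 ∧ ‖T v‖ = ‖T‖ := by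
  have hne : (Metric.sphere (0 : EuclideanSpace ℝ (Fin (n+1))) 1).Nonempty := by
    obtain ⟨v, hv⟩ := exists_norm_eq (EuclideanSpace ℝ (Fin (n+1))) (zero_le_one (α := ℝ))
    exact ⟨v, by simpa [Metric.mem_sphere, dist_zero_right] using hv⟩
  obtain ⟨v, hv, hmax⟩ := (isCompact_sphere (0 : EuclideanSpace ℝ (Fin (n+1))) 1).exists_isMaxOn
    hne (f := fun v => ‖T v‖) (Continuous.continuousOn (by fun_prop))
  have hv1 : ‖v‖ = 1 := by simpa [Metric.mem_sphere, dist_zero_right] using hv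
  refine ⟨v, hv1, le_antisymm ?_ ?_⟩
  · calc ‖T v‖ ≤ ‖T‖ * ‖v‖ := T.le_opNorm v
      _ = ‖T‖ := by rw [hv1, mul_one]
  · refine T.opNorm_le_bound (by positivity) fun w => ?_
    rcases eq_or_ne w 0 with rfl | hw
    · simp
    · have hwpos : (0:ℝ) < ‖w‖ := norm_pos_iff.mpr hw
      have hmem : (‖w‖⁻¹ : ℝ) • w ∈ Metric.sphere (0 : EuclideanSpace ℝ (Fin (n+1))) 1 := by
        simp [norm_smul, abs_of_pos (inv_pos.mpr hwpos), inv_mul_cancel₀ hwpos.ne']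
      have := hmax hmem
      simp only [Set.mem_setOf_eq, _root_.map_smul, norm_smul, norm_inv, norm_norm] at this
      calc ‖T w‖ = ‖w‖ * (‖w‖⁻¹ * ‖T w‖) := by field_simp
        _ ≤ ‖w‖ * ‖T v‖ := by
            have h := this
            nlinarith [norm_nonneg (T w), hwpos]
        _ = ‖T v‖ * ‖w‖ := mul_comm _ _

lemma exists_small_vecMul (n : ℕ) (x : ℝ) (hx : 0 < x) (A : Fin (n+1) → Fin (n+1) → ℝ)
    (HA : ¬ IsUnit (Matrix.of A) ∨ x ≤ opNorm (Matrix.of A)⁻¹) :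
    ∃ w : Fin (n+1) → ℝ, w ≠ 0 ∧
      ‖ι (n+1) (Matrix.vecMul w (Matrix.of A))‖ ≤ ‖ι (n+1) w‖ / x := by
  rcases HA with hA | hA
  · -- singular case
    have hdet : (Matrix.of A)ᵀ.det = 0 := by
      rw [Matrix.det_transpose]
      by_contra h
      exact hA ((Matrix.isUnit_iff_isUnit_det _).mpr (isUnit_iff_ne_zero.mpr h))
    obtain ⟨v, hv0, hv⟩ := (Matrix.exists_mulVec_eq_zero_iff).mpr hdet
    refine ⟨v, hv0, ?_⟩
    rw [← Matrix.mulVec_transpose, hv]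
    simp only [map_zero, norm_zero]
    positivity
  · -- large inverse norm case
    have hU : IsUnit (Matrix.of A) := by
      by_contra h
      rw [Matrix.nonsing_inv_apply_not_isUnit _
        (by rwa [Matrix.isUnit_iff_isUnit_det] at h)] at hA
      simp only [opNorm, map_zero, norm_zero] at hA
      linarith
    have hdet : IsUnit (Matrix.of A).det := (Matrix.isUnit_iff_isUnit_det _).mp hU
    have hdetT : IsUnit ((Matrix.of A)ᵀ).det := by rwa [Matrix.det_transpose]
    -- transpose has the same operator norm
    have htrans : opNorm ((Matrix.of A)ᵀ)⁻¹ = opNorm (Matrix.of A)⁻¹ := by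
      have h1 : ((Matrix.of A)ᵀ)⁻¹ = ((Matrix.of A)⁻¹)ᵀ := (Matrix.transpose_nonsing_inv _).symm
      have h2 : (((Matrix.of A)⁻¹)ᵀ) = ((Matrix.of A)⁻¹)ᴴ :=
        (Matrix.conjTranspose_eq_transpose_of_trivial _).symm
      show ‖toEuclideanCLM (𝕜 := ℝ) ((Matrix.of A)ᵀ)⁻¹‖ = ‖toEuclideanCLM (𝕜 := ℝ) (Matrix.of A)⁻¹‖
      rw [← Matrix.cstar_norm_def, ← Matrix.cstar_norm_def, h1, h2,
        Matrix.l2_opNorm_conjTranspose]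
    set B := toEuclideanCLM (𝕜 := ℝ) (((Matrix.of A)ᵀ)⁻¹) with hB
    have hxB : x ≤ ‖B‖ := by rw [hB]; show x ≤ opNorm _; rw [htrans]; exact hA
    obtain ⟨v, hv1, hvB⟩ := exists_norm_attained n B
    set w' := B v with hw'
    have hw'norm : x ≤ ‖w'‖ := by rw [hw', hvB]; exact hxB
    have hw'0 : w' ≠ 0 := by
      intro h
      rw [h, norm_zero] at hw'norm
      linarith
    set w : Fin (n+1) → ℝ := (ι (n+1)).symm w' with hw
    have hιw : ι (n+1) w = w' := (ι (n+1)).apply_symm_apply w'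
    refine ⟨w, ?_, ?_⟩
    · intro h
      apply hw'0
      rw [← hιw, h, map_zero]
    · have hAv : toEuclideanCLM (𝕜 := ℝ) ((Matrix.of A)ᵀ) w' = v := by
        rw [hw', ← ContinuousLinearMap.comp_apply, hB, ← ContinuousLinearMap.mul_def, ← _root_.map_mul,
          Matrix.mul_nonsing_inv _ hdetT, _root_.map_one, ContinuousLinearMap.one_apply]
      have hkey : ι (n+1) (Matrix.vecMul w (Matrix.of A)) = v := by
        rw [← Matrix.mulVec_transpose, ← hAv, ← hιw]
        rw [iota_apply, iota_apply, WithLp.equiv_symm_apply, Matrix.toEuclideanCLM_toLp]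
      rw [hkey, hv1, hιw]
      rw [le_div_iff₀ hx, one_mul]
      exact hw'norm

lemma iota_coord (d : ℕ) (v : Fin d → ℝ) (k : Fin d) : (ι d v) k = v k := rfl

lemma event_subset (n : ℕ) (x : ℝ) (hx : 0 < x) :
    {A : Fin (n+1) → Fin (n+1) → ℝ | ¬ IsUnit (Matrix.of A) ∨ x ≤ opNorm (Matrix.of A)⁻¹} ⊆
      ⋃ i : Fin (n+1), {A | ∃ c : Fin n → ℝ,
        ‖ι (n+1) (A i + ∑ j, c j • A (i.succAbove j))‖ ≤ Real.sqrt (n+1) / x} := by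
  intro A hA
  obtain ⟨w, hw0, hwle⟩ := exists_small_vecMul n x hx A hA
  obtain ⟨i, _, hi⟩ := Finset.exists_max_image Finset.univ (fun k => |w k|) ⟨0, Finset.mem_univ 0⟩
  have hwi0 : w i ≠ 0 := by
    intro h
    apply hw0
    funext k
    have := hi k (Finset.mem_univ k)
    rw [h, abs_zero] at this
    exact abs_nonpos_iff.mp this
  have hwiabs : (0:ℝ) < |w i| := abs_pos.mpr hwi0
  -- Euclidean norm of w bounded by sqrt(d) * max coordinate
  have hnorm_le : ‖ι (n+1) w‖ ≤ Real.sqrt (n+1) * |w i| := by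
    rw [EuclideanSpace.norm_eq]
    have hsum : (∑ k, ‖(ι (n+1) w) k‖ ^ 2) ≤ (n+1 : ℝ) * (w i)^2 := by
      have : ∀ k ∈ Finset.univ, ‖(ι (n+1) w) k‖ ^ 2 ≤ (w i)^2 := by
        intro k _
        rw [iota_coord, Real.norm_eq_abs, ← sq_abs (w i)]
        exact pow_le_pow_left₀ (abs_nonneg _) (hi k (Finset.mem_univ k)) 2
      calc (∑ k, ‖(ι (n+1) w) k‖ ^ 2) ≤ Finset.univ.card • ((w i)^2) :=
            Finset.sum_le_card_nsmul _ _ _ this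
        _ = (n+1 : ℝ) * (w i)^2 := by
            simp [Finset.card_univ, nsmul_eq_mul]
    calc Real.sqrt (∑ k, ‖(ι (n+1) w) k‖ ^ 2) ≤ Real.sqrt ((n+1 : ℝ) * (w i)^2) :=
          Real.sqrt_le_sqrt hsum
      _ = Real.sqrt (n+1) * |w i| := by
          rw [Real.sqrt_mul (by positivity), Real.sqrt_sq_eq_abs]
  -- decompose vecMul
  have hsumdec : Matrix.vecMul w (Matrix.of A) = ∑ k, w k • A k := by
    funext s
    simp [Matrix.vecMul, dotProduct, Finset.sum_apply]
  refine Set.mem_iUnion.mpr ⟨i, ⟨fun j => (w i)⁻¹ * w (i.succAbove j), ?_⟩⟩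
  have hdec : A i + ∑ j, ((w i)⁻¹ * w (i.succAbove j)) • A (i.succAbove j) =
      (w i)⁻¹ • Matrix.vecMul w (Matrix.of A) := by
    rw [hsumdec, Finset.smul_sum]
    simp_rw [smul_smul]
    rw [Fin.sum_univ_succAbove (fun k => ((w i)⁻¹ * w k) • A k) i,
      inv_mul_cancel₀ hwi0, one_smul]
  show ‖ι (n+1) (A i + ∑ j, ((w i)⁻¹ * w (i.succAbove j)) • A (i.succAbove j))‖ ≤
    Real.sqrt (n+1) / x
  rw [hdec, _root_.map_smul, norm_smul, Real.norm_eq_abs, abs_inv]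
  calc |w i|⁻¹ * ‖ι (n+1) (Matrix.vecMul w (Matrix.of A))‖ ≤
        |w i|⁻¹ * (‖ι (n+1) w‖ / x) := by
        exact mul_le_mul_of_nonneg_left hwle (by positivity)
    _ ≤ |w i|⁻¹ * (Real.sqrt (n+1) * |w i| / x) := by
        gcongr
    _ = Real.sqrt (n+1) / x := by
        field_simp

set_option maxHeartbeats 1000000 in
/-- Smoothed bound on the norm of the inverse (Theorem 4.3 of the paper). -/
theorem smoothed_inverse_norm {d : ℕ} (Abar : Matrix (Fin d) (Fin d) ℝ)
    (σ : ℝ≥0) (hσ : 0 < σ) (x : ℝ) (hx : 0 < x) :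
    (Measure.pi fun i : Fin d => Measure.pi fun j : Fin d =>
        gaussianReal (Abar i j) (σ ^ 2))
      {A : Fin d → Fin d → ℝ |
        ¬ IsUnit (Matrix.of A) ∨ x ≤ opNorm (Matrix.of A)⁻¹} ≤
      ENNReal.ofReal ((d : ℝ) ^ ((3 : ℝ) / 2) / (x * σ)) := by
  match d, Abar with
  | 0, Abar =>
      have hempty : {A : Fin 0 → Fin 0 → ℝ |
          ¬ IsUnit (Matrix.of A) ∨ x ≤ opNorm (Matrix.of A)⁻¹} = ∅ := by
        ext A
        simp only [Set.mem_setOf_eq, Set.mem_empty_iff_false, iff_false, not_or, not_not, not_le]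
        constructor
        · exact isUnit_of_subsingleton _
        · have : Matrix.toEuclideanCLM (𝕜 := ℝ) (Matrix.of A)⁻¹ = 0 :=
            ContinuousLinearMap.ext fun v => Subsingleton.elim _ _
          rw [opNorm, this, norm_zero]
          exact hx
      rw [hempty]
      simp
  | n + 1, Abar =>
      set ν : Fin (n+1) → Measure (Fin (n+1) → ℝ) :=
        fun i => Measure.pi fun j : Fin (n+1) => gaussianReal (Abar i j) (σ ^ 2) with hν
      set t : ℝ := Real.sqrt (n+1) / x with htdef
      have ht : 0 ≤ t := by positivity
      set S : Set ((Fin (n+1) → ℝ) × (Fin n → Fin (n+1) → ℝ)) :=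
        {p | ∃ c : Fin n → ℝ, ‖ι (n+1) (p.1 + ∑ j, c j • p.2 j)‖ ≤ t} with hSdef
      have hS : MeasurableSet S := measurableSet_S (n+1) n t
      have hrow : ∀ i : Fin (n+1), (Measure.pi ν)
          {A : Fin (n+1) → Fin (n+1) → ℝ | ∃ c : Fin n → ℝ,
            ‖ι (n+1) (A i + ∑ j, c j • A (i.succAbove j))‖ ≤ t} ≤ ENNReal.ofReal (t / σ) := by
        intro i
        have hpre : {A : Fin (n+1) → Fin (n+1) → ℝ | ∃ c : Fin n → ℝ,
            ‖ι (n+1) (A i + ∑ j, c j • A (i.succAbove j))‖ ≤ t} =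
            (MeasurableEquiv.piFinSuccAbove (fun _ : Fin (n+1) => (Fin (n+1) → ℝ)) i) ⁻¹' S := rfl
        haveI : ∀ i, SigmaFinite (ν i) := fun i => by rw [hν]; infer_instance
        rw [hpre, (measurePreserving_piFinSuccAbove ν i).measure_preimage hS.nullMeasurableSet,
          Measure.prod_apply_symm hS]
        have hslice : ∀ B : Fin n → (Fin (n+1) → ℝ),
            (ν i) ((fun r => (r, B)) ⁻¹' S) ≤ ENNReal.ofReal (t / σ) := by
          intro B
          have h1 : (fun r => (r, B)) ⁻¹' S =
              {r : Fin (n+1) → ℝ | ∃ c : Fin n → ℝ, ‖ι (n+1) (r + ∑ j, c j • B j)‖ ≤ t} := rfl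
          rw [h1]
          exact slice_bound (n+1) n (by omega) (Abar i) σ hσ.ne' t ht B
        calc ∫⁻ B, (ν i) ((fun r => (r, B)) ⁻¹' S) ∂(Measure.pi fun j => ν (i.succAbove j)) ≤
              ∫⁻ _, ENNReal.ofReal (t / σ) ∂(Measure.pi fun j => ν (i.succAbove j)) :=
              lintegral_mono hslice
          _ = ENNReal.ofReal (t / σ) := by
              rw [lintegral_const, measure_univ, mul_one]
      calc (Measure.pi ν) {A : Fin (n+1) → Fin (n+1) → ℝ |
            ¬ IsUnit (Matrix.of A) ∨ x ≤ opNorm (Matrix.of A)⁻¹} ≤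
          (Measure.pi ν) (⋃ i : Fin (n+1), {A | ∃ c : Fin n → ℝ,
            ‖ι (n+1) (A i + ∑ j, c j • A (i.succAbove j))‖ ≤ t}) :=
            measure_mono (event_subset n x hx)
        _ ≤ ∑ i : Fin (n+1), (Measure.pi ν) {A | ∃ c : Fin n → ℝ,
              ‖ι (n+1) (A i + ∑ j, c j • A (i.succAbove j))‖ ≤ t} :=
            measure_iUnion_fintype_le _ _
        _ ≤ ∑ _i : Fin (n+1), ENNReal.ofReal (t / σ) := Finset.sum_le_sum fun i _ => hrow i
        _ = ((n+1 : ℕ) : ℝ≥0∞) * ENNReal.ofReal (t / σ) := by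
            rw [Finset.sum_const, Finset.card_univ, Fintype.card_fin, nsmul_eq_mul]
        _ ≤ ENNReal.ofReal (((n+1 : ℕ) : ℝ) ^ ((3 : ℝ) / 2) / (x * σ)) := by
            rw [← ENNReal.ofReal_natCast (n+1), ← ENNReal.ofReal_mul (by positivity)]
            refine ENNReal.ofReal_le_ofReal (le_of_eq ?_)
            have hdpos : (0:ℝ) < ((n+1 : ℕ) : ℝ) := by positivity
            have h32 : ((n+1 : ℕ) : ℝ) ^ ((3:ℝ)/2) =
                ((n+1 : ℕ) : ℝ) * Real.sqrt ((n+1 : ℕ) : ℝ) := by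
              rw [show (3:ℝ)/2 = 1 + 1/2 by norm_num, Real.rpow_add hdpos, Real.rpow_one,
                ← Real.sqrt_eq_rpow]
            rw [h32, htdef]
            have hσpos : (0:ℝ) < σ := hσ
            have hcast : ((n+1 : ℕ) : ℝ) = (n : ℝ) + 1 := by push_cast; ring
            rw [hcast]
            field_simp
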